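/- arXiv:1705.03561 — 2 statements merged into one kernel-verified Lean document; each statement's English description precedes it below -/
import Mathlib

section
/- Let H be a 3-uniform linear hypergraph containing no Berge cycle of length 4, let v be a vertex, and let x, y be distinct vertices in N₁(v). Define S_x as the set of vertices w ∉ N₁(v) ∪ {v} such that some hyperedge h with h ∩ N₁(v) = {x} contains w, and similarly S_y. If {x, y, v} is not a hyperedge of H, then S_x ∩ S_y = ∅; if {x, y, v} is a hyperedge of H, then |S_x ∩ S_y| ≤ 2. -/
open Finset

/-- Degree of a vertex: number of hyperedges containing it. -/
def hyperDeg {V : Type*} [DecidableEq V] (H : Finset (Finset V)) (v : V) : ℕ :=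
  (H.filter fun e => v ∈ e).card

/-- First neighborhood: vertices other than `v` sharing a hyperedge with `v`. -/
def N1 {V : Type*} [DecidableEq V] (H : Finset (Finset V)) (v : V) : Finset V :=
  ((H.filter fun e => v ∈ e).biUnion id).erase v

/-- Second neighborhood: vertices outside `N1 H v ∪ {v}` lying in a hyperedge
that meets `N1 H v`. -/
def N2 {V : Type*} [DecidableEq V] (H : Finset (Finset V)) (v : V) : Finset V :=
  ((H.filter fun e => (e ∩ N1 H v).Nonempty).biUnion id) \ insert v (N1 H v)

/-- A hypergraph is linear if any two distinct hyperedges share at most one vertex. -/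
def IsLinear {V : Type*} [DecidableEq V] (H : Finset (Finset V)) : Prop :=
  ∀ e ∈ H, ∀ f ∈ H, e ≠ f → (e ∩ f).card ≤ 1

/-- A Berge cycle of length `k`: `k` distinct vertices and `k` distinct hyperedges,
with `v i, v (i+1) ∈ h i` cyclically. -/
def HasBergeCycle {V : Type*} (H : Finset (Finset V)) (k : ℕ) : Prop :=
  ∃ (v : ZMod k → V) (h : ZMod k → Finset V),
    Function.Injective v ∧ Function.Injective h ∧
    ∀ i, h i ∈ H ∧ v i ∈ h i ∧ v (i + 1) ∈ h i

/-- `Sset H v x` : the set of vertices `w ∉ N1(v) ∪ {v}` contained in some hyperedge `h`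
with `h ∩ N1(v) = {x}`. -/
def Sset {V : Type*} [DecidableEq V] (H : Finset (Finset V)) (v x : V) : Finset V :=
  ((H.filter fun h => h ∩ N1 H v = {x}).biUnion id) \ insert v (N1 H v)

/- ### Auxiliary lemmas -/

lemma mem_N1_iff' {V : Type*} [DecidableEq V] {H : Finset (Finset V)} {v u : V} :
    u ∈ N1 H v ↔ u ≠ v ∧ ∃ e ∈ H, v ∈ e ∧ u ∈ e := by
  simp [N1]
  tauto

lemma mem_Sset_iff' {V : Type*} [DecidableEq V] {H : Finset (Finset V)} {v x w : V} :
    w ∈ Sset H v x ↔ (∃ h ∈ H, h ∩ N1 H v = {x} ∧ w ∈ h) ∧ w ≠ v ∧ w ∉ N1 H v := by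
  simp [Sset]
  tauto

lemma v_not_mem_Sedge' {V : Type*} [DecidableEq V] {H : Finset (Finset V)} {v x : V}
    {h : Finset V} (hH : h ∈ H) (hcard : h.card = 3) (hInt : h ∩ N1 H v = {x}) : v ∉ h := by
  intro hv
  have hsub : h.erase v ⊆ h ∩ N1 H v := by
    intro u hu
    rw [mem_erase] at hu
    rw [mem_inter]
    exact ⟨hu.2, mem_N1_iff'.mpr ⟨hu.1, h, hH, hv, hu.2⟩⟩
  have := Finset.card_le_card hsub
  rw [hInt, Finset.card_erase_of_mem hv, hcard] at this
  simp at this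

lemma four_elems' {V : Type*} [DecidableEq V] {e : Finset V} (hcard : e.card = 3) {a b c d : V}
    (ha : a ∈ e) (hb : b ∈ e) (hc : c ∈ e) (hd : d ∈ e)
    (hab : a ≠ b) (hac : a ≠ c) (had : a ≠ d) (hbc : b ≠ c) (hbd : b ≠ d) (hcd : c ≠ d) :
    False := by
  have hsub : ({a, b, c, d} : Finset V) ⊆ e := by
    intro u hu
    simp only [mem_insert, mem_singleton] at hu
    rcases hu with rfl | rfl | rfl | rfl <;> assumption
  have h4 : ({a, b, c, d} : Finset V).card = 4 := by
    rw [card_insert_of_notMem (by simp [hab, hac, had]),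
        card_insert_of_notMem (by simp [hbc, hbd]),
        card_insert_of_notMem (by simp [hcd]), card_singleton]
  have := Finset.card_le_card hsub
  omega

def quad' {α : Type*} (a b c d : α) : ZMod 4 → α := fun i =>
  if i = 0 then a else if i = 1 then b else if i = 2 then c else d

lemma quad'0 {α : Type*} (a b c d : α) : quad' a b c d 0 = a := by simp [quad']
lemma quad'1 {α : Type*} (a b c d : α) : quad' a b c d 1 = b := by
  simp [quad', show (1 : ZMod 4) ≠ 0 by decide]
lemma quad'2 {α : Type*} (a b c d : α) : quad' a b c d 2 = c := by
  simp [quad', show (2 : ZMod 4) ≠ 0 by decide, show (2 : ZMod 4) ≠ 1 by decide]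
lemma quad'3 {α : Type*} (a b c d : α) : quad' a b c d 3 = d := by
  simp [quad', show (3 : ZMod 4) ≠ 0 by decide, show (3 : ZMod 4) ≠ 1 by decide,
    show (3 : ZMod 4) ≠ 2 by decide]
lemma quad'01 {α : Type*} (a b c d : α) : quad' a b c d (0 + 1) = b := by
  have : (0 + 1 : ZMod 4) = 1 := by decide
  rw [this, quad'1]
lemma quad'12 {α : Type*} (a b c d : α) : quad' a b c d (1 + 1) = c := by
  have : (1 + 1 : ZMod 4) = 2 := by decide
  rw [this, quad'2]
lemma quad'23 {α : Type*} (a b c d : α) : quad' a b c d (2 + 1) = d := by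
  have : (2 + 1 : ZMod 4) = 3 := by decide
  rw [this, quad'3]
lemma quad'31 {α : Type*} (a b c d : α) : quad' a b c d (3 + 1) = a := by
  have : (3 + 1 : ZMod 4) = 0 := by decide
  rw [this, quad'0]

lemma quad'_inj {α : Type*} {a b c d : α} (hab : a ≠ b) (hac : a ≠ c) (had : a ≠ d)
    (hbc : b ≠ c) (hbd : b ≠ d) (hcd : c ≠ d) : Function.Injective (quad' a b c d) := by
  intro i j hij
  have key : ∀ k : ZMod 4, k = 0 ∨ k = 1 ∨ k = 2 ∨ k = 3 := by decide
  rcases key i with rfl | rfl | rfl | rfl <;> rcases key j with rfl | rfl | rfl | rfl <;>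
    simp_all [quad'0, quad'1, quad'2, quad'3]

lemma cyc4' {V : Type*} {H : Finset (Finset V)} (hNoC4 : ¬ HasBergeCycle H 4)
    {a b c d : V} {e1 e2 e3 e4 : Finset V}
    (vab : a ≠ b) (vac : a ≠ c) (vad : a ≠ d) (vbc : b ≠ c) (vbd : b ≠ d) (vcd : c ≠ d)
    (e12 : e1 ≠ e2) (e13 : e1 ≠ e3) (e14 : e1 ≠ e4) (e23 : e2 ≠ e3) (e24 : e2 ≠ e4)
    (e34 : e3 ≠ e4)
    (h1 : e1 ∈ H) (h2 : e2 ∈ H) (h3 : e3 ∈ H) (h4 : e4 ∈ H)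
    (m1a : a ∈ e1) (m1b : b ∈ e1) (m2b : b ∈ e2) (m2c : c ∈ e2)
    (m3c : c ∈ e3) (m3d : d ∈ e3) (m4d : d ∈ e4) (m4a : a ∈ e4) : False := by
  apply hNoC4
  refine ⟨quad' a b c d, quad' e1 e2 e3 e4, quad'_inj vab vac vad vbc vbd vcd,
    quad'_inj e12 e13 e14 e23 e24 e34, ?_⟩
  intro i
  fin_cases i <;>
    simp only [quad'0, quad'1, quad'2, quad'3, quad'01, quad'12, quad'23, quad'31] <;>
    exact ⟨by assumption, by assumption, by assumption⟩

theorem stmt_6 {V : Type*} [Fintype V] [DecidableEq V]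
    (H : Finset (Finset V))
    (hUnif : ∀ e ∈ H, e.card = 3)
    (hLin : IsLinear H)
    (hNoC4 : ¬ HasBergeCycle H 4)
    (v x y : V) (hx : x ∈ N1 H v) (hy : y ∈ N1 H v) (hxy : x ≠ y) :
    (({x, y, v} : Finset V) ∉ H → Sset H v x ∩ Sset H v y = ∅) ∧
    (({x, y, v} : Finset V) ∈ H → (Sset H v x ∩ Sset H v y).card ≤ 2) := by
  have hxv : x ≠ v := (mem_N1_iff'.mp hx).1
  have hyv : y ≠ v := (mem_N1_iff'.mp hy).1
  obtain ⟨-, ex, hexH, hvex, hxex⟩ := mem_N1_iff'.mp hx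
  obtain ⟨-, ey, heyH, hvey, hyey⟩ := mem_N1_iff'.mp hy
  -- membership of x (resp. y) in intersection-witness edges
  have memx : ∀ e : Finset V, e ∩ N1 H v = {x} → x ∈ e := by
    intro e he
    have : x ∈ e ∩ N1 H v := by rw [he]; exact mem_singleton_self x
    exact (mem_inter.mp this).1
  have memy : ∀ e : Finset V, e ∩ N1 H v = {y} → y ∈ e := by
    intro e he
    have : y ∈ e ∩ N1 H v := by rw [he]; exact mem_singleton_self y
    exact (mem_inter.mp this).1
  -- x-witness edges and y-witness edges are distinct
  have intne : ∀ e f : Finset V, e ∩ N1 H v = {x} → f ∩ N1 H v = {y} → e ≠ f := by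
    intro e f he hf h
    apply hxy
    have : ({x} : Finset V) = {y} := by rw [← he, ← hf, h]
    exact Finset.singleton_inj.mp this
  -- extraction of witnesses
  have extract : ∀ w ∈ Sset H v x ∩ Sset H v y,
      ∃ ex' ey' : Finset V, ex' ∈ H ∧ ey' ∈ H ∧ ex' ∩ N1 H v = {x} ∧ ey' ∩ N1 H v = {y} ∧
        w ∈ ex' ∧ w ∈ ey' ∧ w ∉ N1 H v ∧ w ≠ v := by
    intro w hw
    rw [mem_inter] at hw
    obtain ⟨⟨ex', hex'H, hex'I, hwex'⟩, hwv, hwN⟩ := mem_Sset_iff'.mp hw.1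
    obtain ⟨⟨ey', hey'H, hey'I, hwey'⟩, -, -⟩ := mem_Sset_iff'.mp hw.2
    exact ⟨ex', ey', hex'H, hey'H, hex'I, hey'I, hwex', hwey', hwN, hwv⟩
  -- the "bad pair" lemma : two elements of the intersection with distinct witnessing
  -- edges on both sides yield a Berge C4
  have pairbad : ∀ (w w' : V) (Xw Yw Xw' Yw' : Finset V),
      w ≠ w' → w ∉ N1 H v → w' ∉ N1 H v →
      Xw ∈ H → Yw ∈ H → Xw' ∈ H → Yw' ∈ H →
      Xw ∩ N1 H v = {x} → Yw ∩ N1 H v = {y} → Xw' ∩ N1 H v = {x} → Yw' ∩ N1 H v = {y} →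
      w ∈ Xw → w ∈ Yw → w' ∈ Xw' → w' ∈ Yw' →
      Xw ≠ Xw' → Yw ≠ Yw' → False := by
    intro w w' Xw Yw Xw' Yw' hww' hwN hw'N hXwH hYwH hXw'H hYw'H hXwI hYwI hXw'I hYw'I
      hwXw hwYw hw'Xw' hw'Yw' hXne hYne
    have hxw : x ≠ w := fun h => hwN (h ▸ hx)
    have hxw' : x ≠ w' := fun h => hw'N (h ▸ hx)
    have hyw : y ≠ w := fun h => hwN (h ▸ hy)
    have hyw' : y ≠ w' := fun h => hw'N (h ▸ hy)
    -- cycle: x, w, y, w' with edges Xw, Yw, Yw', Xw'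
    exact cyc4' hNoC4 hxw hxy hxw' hyw.symm hww' hyw'
      (intne _ _ hXwI hYwI) (intne _ _ hXwI hYw'I) hXne hYne
      ((intne _ _ hXw'I hYwI).symm) ((intne _ _ hXw'I hYw'I).symm)
      hXwH hYwH hYw'H hXw'H
      (memx _ hXwI) hwXw hwYw (memy _ hYwI)
      (memy _ hYw'I) hw'Yw' hw'Xw' (memx _ hXw'I)
  constructor
  · -- Case 1 : {x,y,v} ∉ H
    intro hXYV
    rw [Finset.eq_empty_iff_forall_notMem]
    intro w hw
    obtain ⟨Xw, Yw, hXwH, hYwH, hXwI, hYwI, hwXw, hwYw, hwN, hwv⟩ := extract w hw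
    have hvXw : v ∉ Xw := v_not_mem_Sedge' hXwH (hUnif _ hXwH) hXwI
    have hvYw : v ∉ Yw := v_not_mem_Sedge' hYwH (hUnif _ hYwH) hYwI
    have hxw : x ≠ w := fun h => hwN (h ▸ hx)
    have hyw : y ≠ w := fun h => hwN (h ▸ hy)
    have hexey : ex ≠ ey := by
      intro h
      have hsub : ({x, y, v} : Finset V) ⊆ ex := by
        intro u hu
        simp only [mem_insert, mem_singleton] at hu
        rcases hu with rfl | rfl | rfl
        · exact hxex
        · rw [h]; exact hyey
        · exact hvex
      have hc : ({x, y, v} : Finset V).card = 3 := by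
        rw [card_insert_of_notMem (by simp [hxy, hxv]),
            card_insert_of_notMem (by simp [hyv]), card_singleton]
      have heq : ({x, y, v} : Finset V) = ex :=
        Finset.eq_of_subset_of_card_le hsub (by rw [hUnif ex hexH, hc])
      exact hXYV (by rw [heq]; exact hexH)
    -- cycle: v, x, w, y with edges ex, Xw, Yw, ey
    exact cyc4' hNoC4 hxv.symm hwv.symm hyv.symm hxw hxy hyw.symm
      (by intro h; exact hvXw (h ▸ hvex)) (by intro h; exact hvYw (h ▸ hvex)) hexey
      (intne _ _ hXwI hYwI) (by intro h; exact hvXw (h.symm ▸ hvey))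
      (by intro h; exact hvYw (h.symm ▸ hvey))
      hexH hXwH hYwH heyH
      hvex hxex (memx _ hXwI) hwXw hwYw (memy _ hYwI) hyey hvey
  · -- Case 2 : {x,y,v} ∈ H
    intro _
    by_contra hgt
    push_neg at hgt
    obtain ⟨t, hts, ht3⟩ :=
      Finset.exists_subset_card_eq (show 3 ≤ (Sset H v x ∩ Sset H v y).card by omega)
    obtain ⟨a, b, c, hab, hac, hbc, rfl⟩ := Finset.card_eq_three.mp ht3
    have haS : a ∈ Sset H v x ∩ Sset H v y := hts (by simp)
    have hbS : b ∈ Sset H v x ∩ Sset H v y := hts (by simp)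
    have hcS : c ∈ Sset H v x ∩ Sset H v y := hts (by simp)
    obtain ⟨Xa, Ya, hXaH, hYaH, hXaI, hYaI, haXa, haYa, haN, hav⟩ := extract a haS
    obtain ⟨Xb, Yb, hXbH, hYbH, hXbI, hYbI, hbXb, hbYb, hbN, hbv⟩ := extract b hbS
    obtain ⟨Xc, Yc, hXcH, hYcH, hXcI, hYcI, hcXc, hcYc, hcN, hcv⟩ := extract c hcS
    have hxa : x ≠ a := fun h => haN (h ▸ hx)
    have hxb : x ≠ b := fun h => hbN (h ▸ hx)
    have hxc : x ≠ c := fun h => hcN (h ▸ hx)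
    have hya : y ≠ a := fun h => haN (h ▸ hy)
    have hyb : y ≠ b := fun h => hbN (h ▸ hy)
    have hyc : y ≠ c := fun h => hcN (h ▸ hy)
    have fourX : ∀ e : Finset V, e ∈ H → x ∈ e → a ∈ e → b ∈ e → c ∈ e → False :=
      fun e heH h1 h2 h3 h4 =>
        four_elems' (hUnif e heH) h1 h2 h3 h4 hxa hxb hxc hab hac hbc
    have fourY : ∀ e : Finset V, e ∈ H → y ∈ e → a ∈ e → b ∈ e → c ∈ e → False :=
      fun e heH h1 h2 h3 h4 =>
        four_elems' (hUnif e heH) h1 h2 h3 h4 hya hyb hyc hab hac hbc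
    have n1 : Xa = Xb ∨ Ya = Yb := by
      by_contra hcon
      push_neg at hcon
      exact pairbad a b Xa Ya Xb Yb hab haN hbN hXaH hYaH hXbH hYbH hXaI hYaI hXbI hYbI
        haXa haYa hbXb hbYb hcon.1 hcon.2
    have n2 : Xa = Xc ∨ Ya = Yc := by
      by_contra hcon
      push_neg at hcon
      exact pairbad a c Xa Ya Xc Yc hac haN hcN hXaH hYaH hXcH hYcH hXaI hYaI hXcI hYcI
        haXa haYa hcXc hcYc hcon.1 hcon.2
    have n3 : Xb = Xc ∨ Yb = Yc := by
      by_contra hcon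
      push_neg at hcon
      exact pairbad b c Xb Yb Xc Yc hbc hbN hcN hXbH hYbH hXcH hYcH hXbI hYbI hXcI hYcI
        hbXb hbYb hcXc hcYc hcon.1 hcon.2
    rcases n1 with h1 | h1 <;> rcases n2 with h2 | h2 <;> rcases n3 with h3 | h3
    · exact fourX Xa hXaH (memx _ hXaI) haXa (by rw [h1]; exact hbXb) (by rw [h2]; exact hcXc)
    · exact fourX Xa hXaH (memx _ hXaI) haXa (by rw [h1]; exact hbXb) (by rw [h2]; exact hcXc)
    · exact fourX Xa hXaH (memx _ hXaI) haXa (by rw [h1]; exact hbXb)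
        (by rw [h1, h3]; exact hcXc)
    · exact fourY Yc hYcH (memy _ hYcI) (by rw [← h2]; exact haYa) (by rw [← h3]; exact hbYb)
        hcYc
    · exact fourX Xc hXcH (memx _ hXcI) (by rw [← h2]; exact haXa) (by rw [← h3]; exact hbXb)
        hcXc
    · exact fourY Ya hYaH (memy _ hYaI) haYa (by rw [h1]; exact hbYb) (by rw [h1, h3]; exact hcYc)
    · exact fourY Ya hYaH (memy _ hYaI) haYa (by rw [h1]; exact hbYb) (by rw [h2]; exact hcYc)
    · exact fourY Ya hYaH (memy _ hYaI) haYa (by rw [h1]; exact hbYb) (by rw [h2]; exact hcYc)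
end

section
/- Every 3-uniform linear hypergraph on n vertices containing no Berge cycle of length 4 has at most (1/6)·n·√(n+9) + n/2 hyperedges. -/
open Finset

section Aux

variable {V : Type*} [DecidableEq V] {H : Finset (Finset V)}

lemma four_mem {e : Finset V} (he : e.card = 3) {a b c d : V}
    (ha : a ∈ e) (hb : b ∈ e) (hc : c ∈ e) (hd : d ∈ e)
    (hab : a ≠ b) (hac : a ≠ c) (had : a ≠ d) (hbc : b ≠ c) (hbd : b ≠ d)
    (hcd : c ≠ d) : False := by
  have hsub : ({a, b, c, d} : Finset V) ⊆ e := by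
    intro x hx; simp only [mem_insert, mem_singleton] at hx
    rcases hx with h | h | h | h <;> subst h <;> assumption
  have h4 : ({a, b, c, d} : Finset V).card = 4 := by
    rw [card_insert_of_notMem (by simp [hab, hac, had]),
      card_insert_of_notMem (by simp [hbc, hbd]),
      card_insert_of_notMem (by simp [hcd]), card_singleton]
  have := card_le_card hsub; omega


lemma lin_eq (hLin : IsLinear H) {e f : Finset V} (he : e ∈ H) (hf : f ∈ H)
    {a b : V} (hab : a ≠ b) (hae : a ∈ e) (hbe : b ∈ e) (haf : a ∈ f)
    (hbf : b ∈ f) : e = f := by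
  classical
  by_contra hne
  have h1 := hLin e he f hf hne
  have hsub : ({a, b} : Finset V) ⊆ e ∩ f := by
    intro x hx; simp only [mem_insert, mem_singleton] at hx
    rcases hx with h | h <;> subst h <;> simp [mem_inter, *]
  have h2 : ({a, b} : Finset V).card = 2 := card_pair hab
  have := card_le_card hsub; omega


lemma buildC4 {v1 v2 v3 v4 : V} {h1 h2 h3 h4 : Finset V}
    (v12 : v1 ≠ v2) (v13 : v1 ≠ v3) (v14 : v1 ≠ v4) (v23 : v2 ≠ v3)
    (v24 : v2 ≠ v4) (v34 : v3 ≠ v4)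
    (e12 : h1 ≠ h2) (e13 : h1 ≠ h3) (e14 : h1 ≠ h4) (e23 : h2 ≠ h3)
    (e24 : h2 ≠ h4) (e34 : h3 ≠ h4)
    (m1 : h1 ∈ H) (m2 : h2 ∈ H) (m3 : h3 ∈ H) (m4 : h4 ∈ H)
    (i11 : v1 ∈ h1) (i21 : v2 ∈ h1) (i22 : v2 ∈ h2) (i32 : v3 ∈ h2)
    (i33 : v3 ∈ h3) (i43 : v4 ∈ h3) (i44 : v4 ∈ h4) (i14 : v1 ∈ h4) :
    HasBergeCycle H 4 := by
  have d10 : ((1:ZMod 4) = 0) = False := by decide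
  have d20 : ((2:ZMod 4) = 0) = False := by decide
  have d21 : ((2:ZMod 4) = 1) = False := by decide
  have d30 : ((3:ZMod 4) = 0) = False := by decide
  have d31 : ((3:ZMod 4) = 1) = False := by decide
  have d32 : ((3:ZMod 4) = 2) = False := by decide
  have s0 : (0:ZMod 4) + 1 = 1 := by decide
  have s1 : (1:ZMod 4) + 1 = 2 := by decide
  have s2 : (2:ZMod 4) + 1 = 3 := by decide
  have s3 : (3:ZMod 4) + 1 = 0 := by decide
  refine ⟨fun i => if i = 0 then v1 else if i = 1 then v2 else if i = 2 then v3 else v4,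
    fun i => if i = 0 then h1 else if i = 1 then h2 else if i = 2 then h3 else h4, ?_, ?_, ?_⟩
  · intro a b hab
    fin_cases a <;> fin_cases b <;>
      simp only [d10, d20, d21, d30, d31, d32, if_true, if_false, eq_self_iff_true] at hab ⊢ <;>
      first | rfl | exact absurd hab (by assumption) | exact absurd hab.symm (by assumption)
  · intro a b hab
    fin_cases a <;> fin_cases b <;>
      simp only [d10, d20, d21, d30, d31, d32, if_true, if_false, eq_self_iff_true] at hab ⊢ <;>
      first | rfl | exact absurd hab (by assumption) | exact absurd hab.symm (by assumption)
  · intro i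
    fin_cases i <;>
      simp only [s0, s1, s2, s3, d10, d20, d21, d30, d31, d32, if_true, if_false,
        eq_self_iff_true] <;>
      exact ⟨by assumption, by assumption, by assumption⟩

end Aux

section Main

variable {V : Type*} [Fintype V] [DecidableEq V]

/-- A "cherry": `u - e1 - x - e2 - w`. -/
def IsPath (H : Finset (Finset V)) (u w x : V) (e1 e2 : Finset V) : Prop :=
  e1 ∈ H ∧ e2 ∈ H ∧ e1 ≠ e2 ∧ x ∈ e1 ∧ x ∈ e2 ∧ u ∈ e1 ∧ u ≠ x ∧ w ∈ e2 ∧ w ≠ x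

instance (H : Finset (Finset V)) (u w x : V) (e1 e2 : Finset V) :
    Decidable (IsPath H u w x e1 e2) := by unfold IsPath; infer_instance

variable {H : Finset (Finset V)}

lemma path_facts (hLin : IsLinear H) {u w x : V} {e1 e2 : Finset V}
    (hp : IsPath H u w x e1 e2) : u ≠ w ∧ w ∉ e1 ∧ u ∉ e2 := by
  obtain ⟨he1, he2, hne, hx1, hx2, hu1, hux, hw2, hwx⟩ := hp
  have key : ∀ y, y ∈ e1 → y ∈ e2 → y = x := by
    intro y hy1 hy2
    by_contra hyx
    exact hyx (by
      by_contra h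
      exact hne (lin_eq hLin he1 he2 h hy1 hx1 hy2 hx2))
  refine ⟨?_, ?_, ?_⟩
  · intro h; subst h; exact hux (key u hu1 hw2)
  · intro h; exact hwx (key w h hw2)
  · intro h; exact hux (key u hu1 h)

lemma dichotomy (hLin : IsLinear H) (hNoC4 : ¬ HasBergeCycle H 4)
    {u w x x' : V} {e1 e2 e1' e2' : Finset V}
    (hp : IsPath H u w x e1 e2) (hp' : IsPath H u w x' e1' e2')
    (hne : (x, e1, e2) ≠ (x', e1', e2')) :
    x ≠ x' ∧ ((e1 = e1' ∧ e2 ≠ e2') ∨ (e2 = e2' ∧ e1 ≠ e1')) := by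
  obtain ⟨he1, he2, h12, hx1, hx2, hu1, hux, hw2, hwx⟩ := hp
  obtain ⟨he1', he2', h12', hx1', hx2', hu1', hux', hw2', hwx'⟩ := hp'
  obtain ⟨huw, hwne1, hune2⟩ := path_facts hLin ⟨he1, he2, h12, hx1, hx2, hu1, hux, hw2, hwx⟩
  obtain ⟨_, hwne1', hune2'⟩ :=
    path_facts hLin ⟨he1', he2', h12', hx1', hx2', hu1', hux', hw2', hwx'⟩
  have hxx' : x ≠ x' := by
    intro h; subst h
    exact hne (by
      rw [lin_eq hLin he1 he1' hux hu1 hx1 hu1' hx1',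
        lin_eq hLin he2 he2' hwx hw2 hx2 hw2' hx2'])
  refine ⟨hxx', ?_⟩
  by_cases h1 : e1 = e1' <;> by_cases h2 : e2 = e2'
  · exfalso
    subst h1; subst h2
    exact h12 (lin_eq hLin he1 he2 hxx' hx1 hx1' hx2 hx2')
  · exact Or.inl ⟨h1, h2⟩
  · exact Or.inr ⟨h2, h1⟩
  · exfalso
    apply hNoC4
    exact buildC4 (v1 := u) (v2 := x) (v3 := w) (v4 := x')
      (h1 := e1) (h2 := e2) (h3 := e2') (h4 := e1')
      hux huw hux' (fun h => hwx h.symm) hxx' hwx'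
      h12 (fun h => hwne1 (h ▸ hw2')) h1 h2 (fun h => hune2 (h ▸ hu1')) h12'.symm
      he1 he2 he2' he1'
      hu1 hx1 hx2 hw2 hw2' hx2' hx1' hu1'

def PathSet (H : Finset (Finset V)) : Finset (V × V × V × Finset V × Finset V) :=
  ((univ ×ˢ univ ×ˢ univ ×ˢ H ×ˢ H)).filter fun t =>
    IsPath H t.1 t.2.1 t.2.2.1 t.2.2.2.1 t.2.2.2.2

lemma mem_pathSet {t : V × V × V × Finset V × Finset V} :
    t ∈ PathSet H ↔ IsPath H t.1 t.2.1 t.2.2.1 t.2.2.2.1 t.2.2.2.2 := by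
  constructor
  · intro h; exact (mem_filter.1 h).2
  · intro h
    refine mem_filter.2 ⟨?_, h⟩
    simp only [mem_product, mem_univ, true_and]
    exact ⟨h.1, h.2.1⟩

lemma fiber_le_two (hUnif : ∀ e ∈ H, e.card = 3) (hLin : IsLinear H)
    (hNoC4 : ¬ HasBergeCycle H 4) (p : V × V) :
    ((PathSet H).filter fun t => (t.1, t.2.1) = p).card ≤ 2 := by
  obtain ⟨u, w⟩ := p
  by_contra hlt
  push_neg at hlt
  rw [two_lt_card_iff] at hlt
  obtain ⟨a, b, c, ha, hb, hc, hab, hac, hbc⟩ := hlt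
  obtain ⟨ua, wa, xa, ea1, ea2⟩ := a
  obtain ⟨ub, wb, xb, eb1, eb2⟩ := b
  obtain ⟨uc, wc, xc, ec1, ec2⟩ := c
  obtain ⟨haP, hka⟩ := mem_filter.1 ha
  obtain ⟨hbP, hkb⟩ := mem_filter.1 hb
  obtain ⟨hcP, hkc⟩ := mem_filter.1 hc
  simp only [Prod.mk.injEq] at hka hkb hkc
  obtain ⟨rfl, rfl⟩ := hka
  obtain ⟨rfl, rfl⟩ := hkb
  obtain ⟨rfl, rfl⟩ := hkc
  have haP' := mem_pathSet.1 haP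
  have hbP' := mem_pathSet.1 hbP
  have hcP' := mem_pathSet.1 hcP
  dsimp only at haP' hbP' hcP'
  have hneab : (xa, ea1, ea2) ≠ (xb, eb1, eb2) := by
    intro h; apply hab; simp only [Prod.mk.injEq] at h ⊢; tauto
  have hneac : (xa, ea1, ea2) ≠ (xc, ec1, ec2) := by
    intro h; apply hac; simp only [Prod.mk.injEq] at h ⊢; tauto
  have hnebc : (xb, eb1, eb2) ≠ (xc, ec1, ec2) := by
    intro h; apply hbc; simp only [Prod.mk.injEq] at h ⊢; tauto
  obtain ⟨xab, hdab⟩ := dichotomy hLin hNoC4 haP' hbP' hneab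
  obtain ⟨xac, hdac⟩ := dichotomy hLin hNoC4 haP' hcP' hneac
  obtain ⟨xbc, hdbc⟩ := dichotomy hLin hNoC4 hbP' hcP' hnebc
  obtain ⟨hea1, hea2, -, hxa1, hxa2, hua1, huxa, hwa2, hwxa⟩ := haP'
  obtain ⟨heb1, heb2, -, hxb1, hxb2, hub1, huxb, hwb2, hwxb⟩ := hbP'
  obtain ⟨hec1, hec2, -, hxc1, hxc2, huc1, huxc, hwc2, hwxc⟩ := hcP'
  have fourE1 : ea1 = eb1 → ea1 = ec1 → False := fun hpq hqr =>
    four_mem (hUnif ea1 hea1) hua1 hxa1 (hpq.symm ▸ hxb1) (hqr.symm ▸ hxc1)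
      huxa huxb huxc xab xac xbc
  have fourE2 : ea2 = eb2 → ea2 = ec2 → False := fun hpq hqr =>
    four_mem (hUnif ea2 hea2) hwa2 hxa2 (hpq.symm ▸ hxb2) (hqr.symm ▸ hxc2)
      hwxa hwxb hwxc xab xac xbc
  rcases hdab with ⟨hE1ab, hN2ab⟩ | ⟨hE2ab, hN1ab⟩ <;>
    rcases hdac with ⟨hE1ac, hN2ac⟩ | ⟨hE2ac, hN1ac⟩ <;>
    rcases hdbc with ⟨hE1bc, hN2bc⟩ | ⟨hE2bc, hN1bc⟩
  · exact fourE1 hE1ab hE1ac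
  · exact fourE1 hE1ab hE1ac
  · exact fourE1 hE1ab (hE1ab.trans hE1bc)
  · exact hN2ab (hE2ac.trans hE2bc.symm)
  · exact hN1ab (hE1ac.trans hE1bc.symm)
  · exact fourE2 hE2ab (hE2ab.trans hE2bc)
  · exact fourE2 hE2ab hE2ac
  · exact fourE2 hE2ab hE2ac

def Link (H : Finset (Finset V)) (e : Finset V) (z y : V) : Prop :=
  ∃ x x' f g, x ∈ e ∧ x' ∈ e ∧ x ≠ x' ∧ x ≠ z ∧ x' ≠ z ∧ y ∉ e ∧ y ≠ x ∧ y ≠ x' ∧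
    f ∈ H ∧ g ∈ H ∧ f ≠ g ∧ f ≠ e ∧ g ≠ e ∧ x ∈ f ∧ y ∈ f ∧ x' ∈ g ∧ y ∈ g

instance (H : Finset (Finset V)) (e : Finset V) (z y : V) :
    Decidable (Link H e z y) := by unfold Link; infer_instance

lemma bad_to_link (hLin : IsLinear H) (hNoC4 : ¬ HasBergeCycle H 4) (p : V × V)
    (hcard : 1 < ((PathSet H).filter fun t => (t.1, t.2.1) = p).card) :
    (∃ e ∈ H, p.1 ∈ e ∧ Link H e p.1 p.2) ∨ (∃ e ∈ H, p.2 ∈ e ∧ Link H e p.2 p.1) := by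
  obtain ⟨u, w⟩ := p
  rw [Finset.one_lt_card] at hcard
  obtain ⟨a, ha, b, hb, hab⟩ := hcard
  obtain ⟨ua, wa, xa, ea1, ea2⟩ := a
  obtain ⟨ub, wb, xb, eb1, eb2⟩ := b
  obtain ⟨haP, hka⟩ := mem_filter.1 ha
  obtain ⟨hbP, hkb⟩ := mem_filter.1 hb
  simp only [Prod.mk.injEq] at hka hkb
  obtain ⟨rfl, rfl⟩ := hka
  obtain ⟨rfl, rfl⟩ := hkb
  have haP' := mem_pathSet.1 haP
  have hbP' := mem_pathSet.1 hbP
  dsimp only at haP' hbP'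
  have hneab : (xa, ea1, ea2) ≠ (xb, eb1, eb2) := by
    intro h; apply hab; simp only [Prod.mk.injEq] at h ⊢; tauto
  obtain ⟨hxab, hd⟩ := dichotomy hLin hNoC4 haP' hbP' hneab
  obtain ⟨-, hwnea1, hunea2⟩ := path_facts hLin haP'
  obtain ⟨-, hwneb1, huneb2⟩ := path_facts hLin hbP'
  obtain ⟨hea1, hea2, h12a, hxa1, hxa2, hua1, huxa, hwa2, hwxa⟩ := haP'
  obtain ⟨heb1, heb2, h12b, hxb1, hxb2, hub1, huxb, hwb2, hwxb⟩ := hbP'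
  rcases hd with ⟨hE1, hN2⟩ | ⟨hE2, hN1⟩
  · left
    refine ⟨ea1, hea1, hua1, xa, xb, ea2, eb2, hxa1, hE1 ▸ hxb1, hxab,
      huxa.symm, huxb.symm, hwnea1, hwxa, hwxb, hea2, heb2, hN2, h12a.symm,
      ?_, hxa2, hwa2, hxb2, hwb2⟩
    rw [hE1]; exact h12b.symm
  · right
    refine ⟨ea2, hea2, hwa2, xa, xb, ea1, eb1, hxa2, hE2 ▸ hxb2, hxab,
      hwxa.symm, hwxb.symm, hunea2, huxa, huxb, hea1, heb1, hN1, h12a,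
      ?_, hxa1, hua1, hxb1, hub1⟩
    rw [hE2]; exact h12b

lemma link_card (hUnif : ∀ e ∈ H, e.card = 3) (hLin : IsLinear H)
    (hNoC4 : ¬ HasBergeCycle H 4) {e : Finset V} (he : e ∈ H) {z : V} (hz : z ∈ e) :
    (univ.filter fun y => Link H e z y).card ≤ 2 := by
  by_contra hlt
  push_neg at hlt
  rw [two_lt_card_iff] at hlt
  obtain ⟨y1, y2, y3, hy1, hy2, hy3, h12, h13, h23⟩ := hlt
  have hL1 : Link H e z y1 := (mem_filter.1 hy1).2
  have hL2 : Link H e z y2 := (mem_filter.1 hy2).2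
  have hL3 : Link H e z y3 := (mem_filter.1 hy3).2
  have herase : (e.erase z).card = 2 := by
    rw [card_erase_of_mem hz, hUnif e he]
  obtain ⟨a, b, hab, hab_eq⟩ := card_eq_two.1 herase
  have norm : ∀ y, Link H e z y → ∃ F G, F ∈ H ∧ G ∈ H ∧ F ≠ G ∧ F ≠ e ∧ G ≠ e ∧
      a ∈ F ∧ y ∈ F ∧ b ∈ G ∧ y ∈ G ∧ y ∉ e ∧ y ≠ a ∧ y ≠ b := by
    intro y hy
    obtain ⟨x, x', f, g, hxe, hx'e, hxx', hxz, hx'z, hyne, hyx, hyx', hf, hg, hfg,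
      hfe, hge, hxf, hyf, hx'g, hyg⟩ := hy
    have hx : x ∈ ({a, b} : Finset V) := by
      rw [← hab_eq]; exact mem_erase.2 ⟨hxz, hxe⟩
    have hx' : x' ∈ ({a, b} : Finset V) := by
      rw [← hab_eq]; exact mem_erase.2 ⟨hx'z, hx'e⟩
    simp only [mem_insert, mem_singleton] at hx hx'
    rcases hx with rfl | rfl
    · rcases hx' with rfl | rfl
      · exact absurd rfl hxx'
      · exact ⟨f, g, hf, hg, hfg, hfe, hge, hxf, hyf, hx'g, hyg, hyne, hyx, hyx'⟩
    · rcases hx' with rfl | rfl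
      · exact ⟨g, f, hg, hf, hfg.symm, hge, hfe, hx'g, hyg, hxf, hyf, hyne, hyx', hyx⟩
      · exact absurd rfl hxx'
  obtain ⟨F1, G1, hF1, hG1, hFG1, hF1e, hG1e, haF1, hy1F1, hbG1, hy1G1, hy1e, hy1a, hy1b⟩ :=
    norm y1 hL1
  obtain ⟨F2, G2, hF2, hG2, hFG2, hF2e, hG2e, haF2, hy2F2, hbG2, hy2G2, hy2e, hy2a, hy2b⟩ :=
    norm y2 hL2
  obtain ⟨F3, G3, hF3, hG3, hFG3, hF3e, hG3e, haF3, hy3F3, hbG3, hy3G3, hy3e, hy3a, hy3b⟩ :=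
    norm y3 hL3
  have dich : ∀ (yi yj : V) (Fi Gi Fj Gj : Finset V), yi ≠ yj →
      Fi ∈ H → Gi ∈ H → Fj ∈ H → Gj ∈ H → Fi ≠ Gi → Fj ≠ Gj →
      a ∈ Fi → yi ∈ Fi → b ∈ Gi → yi ∈ Gi → a ∈ Fj → yj ∈ Fj → b ∈ Gj → yj ∈ Gj →
      yi ≠ a → yi ≠ b → yj ≠ a → yj ≠ b → Fi = Fj ∨ Gi = Gj := by
    intro yi yj Fi Gi Fj Gj hij hFi hGi hFj hGj hFGi hFGj haFi hyiFi hbGi hyiGi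
      haFj hyjFj hbGj hyjGj hia hib hja hjb
    by_contra hcon
    push_neg at hcon
    obtain ⟨hFF, hGG⟩ := hcon
    have hFiGj : Fi ≠ Gj := by
      intro hEq
      exact four_mem (hUnif Fi hFi) haFi hyiFi (hEq ▸ hbGj) (hEq ▸ hyjGj)
        hia.symm hab hja.symm hib hij (fun h => hjb h.symm)
    have hGiFj : Gi ≠ Fj := by
      intro hEq
      exact four_mem (hUnif Gi hGi) hbGi hyiGi (hEq ▸ haFj) (hEq ▸ hyjFj)
        hib.symm hab.symm hjb.symm hia hij (fun h => hja h.symm)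
    exact hNoC4 (buildC4 (v1 := a) (v2 := yi) (v3 := b) (v4 := yj)
      (h1 := Fi) (h2 := Gi) (h3 := Gj) (h4 := Fj)
      hia.symm hab hja.symm hib hij (fun h => hjb h.symm)
      hFGi hFiGj hFF hGG hGiFj hFGj.symm
      hFi hGi hGj hFj
      haFi hyiFi hyiGi hbGi hbGj hyjGj hyjFj haFj)
  have d12 := dich y1 y2 F1 G1 F2 G2 h12 hF1 hG1 hF2 hG2 hFG1 hFG2
    haF1 hy1F1 hbG1 hy1G1 haF2 hy2F2 hbG2 hy2G2 hy1a hy1b hy2a hy2b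
  have d13 := dich y1 y3 F1 G1 F3 G3 h13 hF1 hG1 hF3 hG3 hFG1 hFG3
    haF1 hy1F1 hbG1 hy1G1 haF3 hy3F3 hbG3 hy3G3 hy1a hy1b hy3a hy3b
  have d23 := dich y2 y3 F2 G2 F3 G3 h23 hF2 hG2 hF3 hG3 hFG2 hFG3
    haF2 hy2F2 hbG2 hy2G2 haF3 hy3F3 hbG3 hy3G3 hy2a hy2b hy3a hy3b
  have fourF : F1 = F2 → F1 = F3 → False := fun hp hq =>
    four_mem (hUnif F1 hF1) haF1 hy1F1 (hp.symm ▸ hy2F2) (hq.symm ▸ hy3F3)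
      hy1a.symm hy2a.symm hy3a.symm h12 h13 h23
  have fourG : G1 = G2 → G1 = G3 → False := fun hp hq =>
    four_mem (hUnif G1 hG1) hbG1 hy1G1 (hp.symm ▸ hy2G2) (hq.symm ▸ hy3G3)
      hy1b.symm hy2b.symm hy3b.symm h12 h13 h23
  rcases d12 with hF12 | hG12 <;> rcases d13 with hF13 | hG13 <;>
    rcases d23 with hF23 | hG23
  · exact fourF hF12 hF13
  · exact fourF hF12 hF13
  · exact fourF hF12 (hF12.trans hF23)
  · exact fourG (hG13.trans hG23.symm) hG13
  · exact fourF (hF13.trans hF23.symm) hF13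
  · exact fourG hG12 (hG12.trans hG23)
  · exact fourG hG12 hG13
  · exact fourG hG12 hG13

lemma deg_sum (hUnif : ∀ e ∈ H, e.card = 3) :
    ∑ x : V, (H.filter fun e => x ∈ e).card = 3 * H.card := by
  have h1 : ∀ x : V, (H.filter fun e => x ∈ e).card = ∑ e ∈ H, if x ∈ e then 1 else 0 :=
    fun x => card_filter _ _
  simp_rw [h1]
  rw [Finset.sum_comm]
  have h2 : ∀ e ∈ H, (∑ x : V, if x ∈ e then 1 else 0) = e.card := by
    intro e _
    rw [← card_filter]
    congr 1
    ext x; simp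
  rw [Finset.sum_congr rfl h2, Finset.sum_congr rfl hUnif, Finset.sum_const, smul_eq_mul,
    Nat.mul_comm]

lemma pathSet_card_ge (hUnif : ∀ e ∈ H, e.card = 3) :
    ∑ x : V, 4 * ((H.filter fun e => x ∈ e).offDiag.card) ≤ (PathSet H).card := by
  set f : V → Finset (V × V × V × Finset V × Finset V) := fun x =>
    ((H.filter fun e => x ∈ e).offDiag).biUnion (fun pr =>
      ((pr.1.erase x) ×ˢ (pr.2.erase x)).image fun q => (q.1, q.2, x, pr.1, pr.2)) with hf
  have hmemf : ∀ x (t : V × V × V × Finset V × Finset V), t ∈ f x →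
      t.2.2.1 = x ∧ t ∈ PathSet H := by
    intro x t ht
    rw [hf, mem_biUnion] at ht
    obtain ⟨pr, hpr, ht⟩ := ht
    rw [mem_image] at ht
    obtain ⟨q, hq, rfl⟩ := ht
    rw [mem_offDiag] at hpr
    obtain ⟨hpr1, hpr2, hprne⟩ := hpr
    rw [mem_filter] at hpr1 hpr2
    rw [mem_product] at hq
    obtain ⟨hq1, hq2⟩ := hq
    rw [mem_erase] at hq1 hq2
    refine ⟨rfl, mem_pathSet.2 ?_⟩
    exact ⟨hpr1.1, hpr2.1, hprne, hpr1.2, hpr2.2, hq1.2, hq1.1, hq2.2, hq2.1⟩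
  have hdisj : ((univ : Finset V) : Set V).PairwiseDisjoint f := by
    intro x _ y _ hxy
    refine disjoint_left.2 fun t ht hty => ?_
    exact hxy (((hmemf x t ht).1).symm.trans (hmemf y t hty).1)
  have hsub : univ.biUnion f ⊆ PathSet H := by
    intro t ht
    rw [mem_biUnion] at ht
    obtain ⟨x, -, ht⟩ := ht
    exact (hmemf x t ht).2
  have hcard : (univ.biUnion f).card = ∑ x : V, (f x).card :=
    card_biUnion (fun x hx y hy hxy => hdisj hx hy hxy)
  have hfx : ∀ x : V, (f x).card = 4 * (H.filter fun e => x ∈ e).offDiag.card := by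
    intro x
    rw [hf]
    rw [card_biUnion]
    · have hone : ∀ pr ∈ (H.filter fun e => x ∈ e).offDiag,
          (((pr.1.erase x) ×ˢ (pr.2.erase x)).image
            fun q : V × V => (q.1, q.2, x, pr.1, pr.2)).card = 4 := by
        intro pr hpr
        rw [mem_offDiag, mem_filter, mem_filter] at hpr
        rw [card_image_of_injective _ (fun q q' hqq => by
          simp only [Prod.mk.injEq] at hqq
          exact Prod.ext hqq.1 hqq.2.1)]
        rw [card_product, card_erase_of_mem hpr.1.2, card_erase_of_mem hpr.2.1.2,
          hUnif _ hpr.1.1, hUnif _ hpr.2.1.1]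
      rw [Finset.sum_congr rfl hone, Finset.sum_const, smul_eq_mul, Nat.mul_comm]
    · intro pr hpr pr' hpr' hne
      refine disjoint_left.2 fun t ht ht' => ?_
      rw [mem_image] at ht ht'
      obtain ⟨q, hq, rfl⟩ := ht
      obtain ⟨q', hq', heq⟩ := ht'
      apply hne
      simp only [Prod.mk.injEq] at heq
      exact Prod.ext heq.2.2.2.1.symm heq.2.2.2.2.symm
  calc ∑ x : V, 4 * ((H.filter fun e => x ∈ e).offDiag.card)
      = ∑ x : V, (f x).card := by
        refine Finset.sum_congr rfl fun x _ => (hfx x).symm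
    _ = (univ.biUnion f).card := hcard.symm
    _ ≤ (PathSet H).card := card_le_card hsub

lemma pathSet_card_le (hUnif : ∀ e ∈ H, e.card = 3) (hLin : IsLinear H)
    (hNoC4 : ¬ HasBergeCycle H 4) :
    (PathSet H).card ≤ Fintype.card V * Fintype.card V + 12 * H.card := by
  have key := card_eq_sum_card_fiberwise
    (f := fun t : V × V × V × Finset V × Finset V => (t.1, t.2.1))
    (s := PathSet H) (t := (univ ×ˢ univ : Finset (V × V))) (fun t _ => by simp)
  rw [key]
  have hstep : ∑ p ∈ (univ ×ˢ univ : Finset (V × V)),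
      ((PathSet H).filter fun t => (t.1, t.2.1) = p).card
      ≤ ∑ p ∈ (univ ×ˢ univ : Finset (V × V)),
        (1 + if 1 < ((PathSet H).filter fun t => (t.1, t.2.1) = p).card then 1 else 0) := by
    refine sum_le_sum fun p _ => ?_
    have h2 := fiber_le_two hUnif hLin hNoC4 p
    split <;> omega
  refine hstep.trans ?_
  rw [Finset.sum_add_distrib, Finset.sum_const, smul_eq_mul, mul_one, Finset.sum_boole]
  have hcard_univ : (univ ×ˢ univ : Finset (V × V)).card = Fintype.card V * Fintype.card V := by
    simp [card_product]
  rw [hcard_univ, Nat.cast_id]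
  have hbad : (((univ ×ˢ univ : Finset (V × V))).filter fun p =>
      1 < ((PathSet H).filter fun t => (t.1, t.2.1) = p).card).card ≤ 12 * H.card := by
    set S1 := (((univ ×ˢ univ : Finset (V × V))).filter fun p =>
      ∃ e ∈ H, p.1 ∈ e ∧ Link H e p.1 p.2) with hS1
    set S2 := (((univ ×ˢ univ : Finset (V × V))).filter fun p =>
      ∃ e ∈ H, p.2 ∈ e ∧ Link H e p.2 p.1) with hS2
    have hsub : (((univ ×ˢ univ : Finset (V × V))).filter fun p =>
        1 < ((PathSet H).filter fun t => (t.1, t.2.1) = p).card) ⊆ S1 ∪ S2 := by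
      intro p hp
      rw [mem_filter] at hp
      rcases bad_to_link hLin hNoC4 p hp.2 with h | h
      · exact mem_union_left _ (mem_filter.2 ⟨hp.1, h⟩)
      · exact mem_union_right _ (mem_filter.2 ⟨hp.1, h⟩)
    have h1 : S1.card ≤ 6 * H.card := by
      have hsub1 : S1 ⊆ H.biUnion fun e => e.biUnion fun z =>
          (univ.filter fun y => Link H e z y).image fun y => (z, y) := by
        intro p hp
        rw [hS1, mem_filter] at hp
        obtain ⟨-, e, heH, hpe, hL⟩ := hp
        rw [mem_biUnion]
        refine ⟨e, heH, ?_⟩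
        rw [mem_biUnion]
        refine ⟨p.1, hpe, ?_⟩
        rw [mem_image]
        exact ⟨p.2, mem_filter.2 ⟨mem_univ _, hL⟩, rfl⟩
      refine (card_le_card hsub1).trans ?_
      refine (card_biUnion_le).trans ?_
      have inner : ∀ e ∈ H, (e.biUnion fun z =>
          (univ.filter fun y => Link H e z y).image fun y => (z, y)).card ≤ 6 := by
        intro e he
        refine (card_biUnion_le).trans ?_
        have hz : ∀ z ∈ e, ((univ.filter fun y => Link H e z y).image
            fun y => (z, y)).card ≤ 2 := by
          intro z hze
          exact (card_image_le).trans (link_card hUnif hLin hNoC4 he hze)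
        refine (sum_le_sum hz).trans ?_
        rw [Finset.sum_const, smul_eq_mul, hUnif e he]
      refine (sum_le_sum inner).trans ?_
      rw [Finset.sum_const, smul_eq_mul]
      omega
    have h2 : S2.card ≤ 6 * H.card := by
      have hsub2 : S2 ⊆ H.biUnion fun e => e.biUnion fun z =>
          (univ.filter fun y => Link H e z y).image fun y => (y, z) := by
        intro p hp
        rw [hS2, mem_filter] at hp
        obtain ⟨-, e, heH, hpe, hL⟩ := hp
        rw [mem_biUnion]
        refine ⟨e, heH, ?_⟩
        rw [mem_biUnion]
        refine ⟨p.2, hpe, ?_⟩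
        rw [mem_image]
        exact ⟨p.1, mem_filter.2 ⟨mem_univ _, hL⟩, rfl⟩
      refine (card_le_card hsub2).trans ?_
      refine (card_biUnion_le).trans ?_
      have inner : ∀ e ∈ H, (e.biUnion fun z =>
          (univ.filter fun y => Link H e z y).image fun y => (y, z)).card ≤ 6 := by
        intro e he
        refine (card_biUnion_le).trans ?_
        have hz : ∀ z ∈ e, ((univ.filter fun y => Link H e z y).image
            fun y => (y, z)).card ≤ 2 := by
          intro z hze
          exact (card_image_le).trans (link_card hUnif hLin hNoC4 he hze)
        refine (sum_le_sum hz).trans ?_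
        rw [Finset.sum_const, smul_eq_mul, hUnif e he]
      refine (sum_le_sum inner).trans ?_
      rw [Finset.sum_const, smul_eq_mul]
      omega
    have := card_union_le S1 S2
    calc (((univ ×ˢ univ : Finset (V × V))).filter fun p =>
        1 < ((PathSet H).filter fun t => (t.1, t.2.1) = p).card).card
        ≤ (S1 ∪ S2).card := card_le_card hsub
      _ ≤ S1.card + S2.card := card_union_le S1 S2
      _ ≤ 6 * H.card + 6 * H.card := Nat.add_le_add h1 h2
      _ = 12 * H.card := by ring
  omega

end Main

theorem stmt_7 {V : Type*} [Fintype V] [DecidableEq V]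
    (H : Finset (Finset V))
    (hUnif : ∀ e ∈ H, e.card = 3)
    (hLin : IsLinear H)
    (hNoC4 : ¬ HasBergeCycle H 4) :
    (H.card : ℝ) ≤ (1 / 6) * (Fintype.card V : ℝ) * Real.sqrt ((Fintype.card V : ℝ) + 9)
      + (Fintype.card V : ℝ) / 2 := by
  have hper : ∀ x : V, 4 * ((H.filter fun e => x ∈ e).offDiag.card)
      + 4 * (H.filter fun e => x ∈ e).card
      = 4 * ((H.filter fun e => x ∈ e).card) ^ 2 := by
    intro x
    rw [offDiag_card, pow_two]
    rcases Nat.eq_zero_or_pos (H.filter fun e => x ∈ e).card with h | h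
    · rw [h]; rfl
    · have hdd := Nat.le_mul_of_pos_left (H.filter fun e => x ∈ e).card h
      omega
  have hnat : 4 * (∑ x : V, ((H.filter fun e => x ∈ e).card) ^ 2)
      ≤ Fintype.card V * Fintype.card V + 24 * H.card := by
    have hlb := pathSet_card_ge (H := H) hUnif
    have hub := pathSet_card_le hUnif hLin hNoC4
    have hdeg := deg_sum (H := H) hUnif
    have hsplit : (∑ x : V, 4 * ((H.filter fun e => x ∈ e).offDiag.card))
        + ∑ x : V, 4 * (H.filter fun e => x ∈ e).card
        = ∑ x : V, 4 * ((H.filter fun e => x ∈ e).card) ^ 2 := by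
      rw [← Finset.sum_add_distrib]
      exact Finset.sum_congr rfl fun x _ => hper x
    have h4deg : ∑ x : V, 4 * (H.filter fun e => x ∈ e).card = 4 * (3 * H.card) := by
      rw [← Finset.mul_sum, hdeg]
    rw [Finset.mul_sum]
    omega
  have hN0 : (0 : ℝ) ≤ (Fintype.card V : ℝ) := Nat.cast_nonneg _
  have hM0 : (0 : ℝ) ≤ (H.card : ℝ) := Nat.cast_nonneg _
  have hcs := sq_sum_le_card_mul_sum_sq (s := (univ : Finset V))
    (f := fun x => (((H.filter fun e => x ∈ e).card : ℝ)))
  have hsum1 : ∑ x : V, (((H.filter fun e => x ∈ e).card : ℝ))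
      = ((3 * H.card : ℕ) : ℝ) := by
    rw [← Nat.cast_sum, deg_sum hUnif]
  have hsum2 : ∑ x : V, (((H.filter fun e => x ∈ e).card : ℝ)) ^ 2
      = ((∑ x : V, ((H.filter fun e => x ∈ e).card) ^ 2 : ℕ) : ℝ) := by
    push_cast
    rfl
  rw [hsum1, hsum2, card_univ] at hcs
  have hnatR : 4 * ((∑ x : V, ((H.filter fun e => x ∈ e).card) ^ 2 : ℕ) : ℝ)
      ≤ (Fintype.card V : ℝ) * (Fintype.card V : ℝ) + 24 * (H.card : ℝ) := by
    exact_mod_cast hnat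
  set N := (Fintype.card V : ℝ) with hN
  set M := (H.card : ℝ) with hM
  set D := ((∑ x : V, ((H.filter fun e => x ∈ e).card) ^ 2 : ℕ) : ℝ) with hD
  have hcs' : (3 * M) ^ 2 ≤ N * D := by
    have : ((3 * H.card : ℕ) : ℝ) = 3 * M := by push_cast; ring
    rw [this] at hcs
    exact hcs
  have hkey : 36 * M ^ 2 ≤ N ^ 3 + 24 * M * N := by
    have h1 : N * (4 * D) ≤ N * (N * N + 24 * M) :=
      mul_le_mul_of_nonneg_left hnatR hN0
    nlinarith [hcs']
  set s := Real.sqrt (N + 9) with hs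
  have hs0 : 0 ≤ s := Real.sqrt_nonneg _
  have hs2 : s ^ 2 = N + 9 := Real.sq_sqrt (by linarith)
  by_cases hm : M ≤ N / 2
  · have : 0 ≤ 1 / 6 * N * s := by positivity
    linarith
  · push_neg at hm
    have ht0 : 0 ≤ 6 * M - 3 * N := by linarith
    have hsq : (6 * M - 3 * N) ^ 2 ≤ (N * s) ^ 2 := by
      rw [mul_pow, hs2]
      nlinarith [mul_nonneg hM0 hN0]
    have hle : 6 * M - 3 * N ≤ N * s := by
      have h1 := Real.sqrt_le_sqrt hsq
      rw [Real.sqrt_sq ht0, Real.sqrt_sq (by positivity : (0:ℝ) ≤ N * s)] at h1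
      exact h1
    linarith
end
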